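/- Let G be a finite simple graph with vertex set V and edge set E, let S ⊆ E, let k be a natural number, and let v, v' be two distinct non-adjacent vertices of G. Suppose C₁, …, C_{k+1} are pairwise disjoint subsets of V ∖ {v, v'} such that for each i: the induced subgraph G[C_i] is connected, no edge of S has both endpoints in C_i, and there exist vertices a_i, b_i ∈ C_i with v a_i ∈ E ∖ S and v' b_i ∈ E ∖ S. Let G' be the graph obtained from G by adding the edge vv' (the set S is unchanged, so vv' ∉ S). Then for every T ⊆ V with |T| ≤ k, the subgraph of G induced on V ∖ T contains no S-cycle if and only if the subgraph of G' induced on V ∖ T contains no S-cycle. -/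

import Mathlib

open SimpleGraph Walk

namespace AddEdgeAux

variable {V : Type} {G : SimpleGraph V}

lemma path_cons_of_edge' {b a u : V} {p : G.Walk b a} (hp : p.IsPath)
    (he : s(b, u) ∈ p.edges) : ∃ (h : G.Adj b u) (q : G.Walk u a), p = Walk.cons h q := by
  cases p with
  | nil => simp at he
  | @cons _ y _ h r =>
    rw [Walk.edges_cons, List.mem_cons] at he
    rcases he with he | he
    · rw [Sym2.eq_iff] at he
      rcases he with ⟨-, rfl⟩ | ⟨rfl, rfl⟩
      · exact ⟨h, r, rfl⟩
      · exact absurd rfl h.ne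
    · exfalso
      have := r.fst_mem_support_of_mem_edges he
      rw [Walk.cons_isPath_iff] at hp
      exact hp.2 this

lemma path_edges_eq_of_edge {p q : V} {P : G.Walk p q} (hP : P.IsPath)
    (he : s(p, q) ∈ P.edges) : P.edges = [s(p, q)] := by
  obtain ⟨h, Q, rfl⟩ := path_cons_of_edge' hP he
  rw [Walk.cons_isPath_iff] at hP
  have hQ : Q = Walk.nil := Walk.isPath_iff_eq_nil.mp hP.1
  subst hQ
  simp

lemma end_not_mem_takeUntil [DecidableEq V] {p q z : V}
    {P : G.Walk p q} (hP : P.IsPath) (hz : z ∈ P.support) (hzq : z ≠ q) :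
    q ∉ (P.takeUntil z hz).support := by
  intro hq
  have hnd := hP.support_nodup
  rw [← P.take_spec hz, Walk.support_append] at hnd
  have hdisj := (List.nodup_append'.mp hnd).2.2
  have hq2 : q ∈ (P.dropUntil z hz).support.tail := by
    have h1 := (P.dropUntil z hz).end_mem_support
    rw [Walk.support_eq_cons] at h1
    rcases List.mem_cons.mp h1 with h1 | h1
    · exact absurd h1.symm hzq
    · exact h1
  exact hdisj hq hq2

lemma start_not_mem_dropUntil [DecidableEq V] {p q z : V}
    {P : G.Walk p q} (hP : P.IsPath) (hz : z ∈ P.support) (hzp : z ≠ p) :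
    p ∉ (P.dropUntil z hz).support := by
  intro hp
  have hnd := hP.support_nodup
  rw [← P.take_spec hz, Walk.support_append] at hnd
  have hdisj := (List.nodup_append'.mp hnd).2.2
  have hp2 : p ∈ (P.dropUntil z hz).support.tail := by
    rw [Walk.support_eq_cons] at hp
    rcases List.mem_cons.mp hp with h1 | h1
    · exact absurd h1 hzp.symm
    · exact h1
  exact hdisj (P.takeUntil z hz).start_mem_support hp2

lemma exists_path_in [DecidableEq V] {A : Set V} (hconn : (G.induce A).Connected) {x y : V}
    (hx : x ∈ A) (hy : y ∈ A) :
    ∃ R : G.Walk x y, R.IsPath ∧ ∀ z ∈ R.support, z ∈ A := by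
  obtain ⟨w⟩ := hconn.preconnected ⟨x, hx⟩ ⟨y, hy⟩
  let f := SimpleGraph.Embedding.induce A (G := G)
  have hw : (w.map f.toHom : G.Walk x y).bypass.IsPath := Walk.bypass_isPath _
  refine ⟨(w.map f.toHom).bypass, hw, ?_⟩
  intro z hz
  have hz2 := (w.map f.toHom).support_bypass_subset hz
  rw [Walk.support_map] at hz2
  obtain ⟨u, _, rfl⟩ := List.mem_map.mp hz2
  exact u.2

/-- Main lemma: from an `S`-edge-containing path between `v` and `v'` (suitably
controlled), and a connector set `A`, we contradict the no-`S`-cycle hypothesis. -/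
lemma no_sPath (G : SimpleGraph V) (S : Set (Sym2 V)) (hS : S ⊆ G.edgeSet)
    (T : Set V) (v v' : V) (hnadj : ¬ G.Adj v v') (A : Set V)
    (hvA : v ∉ A) (hv'A : v' ∉ A) (hAT : ∀ x ∈ A, x ∉ T)
    (hconn : (G.induce A).Connected)
    (hAS : ∀ x y : V, x ∈ A → y ∈ A → s(x, y) ∉ S)
    {a : V} (ha : a ∈ A) (hva : G.Adj v a) (hvaS : s(v, a) ∉ S)
    {b : V} (hb : b ∈ A) (hv'b : G.Adj v' b) (hv'bS : s(v', b) ∉ S)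
    (H : ∀ (w : V) (c : G.Walk w w), c.IsCycle → (∀ x ∈ c.support, x ∉ T) →
        ∀ e ∈ c.edges, e ∉ S)
    {e : Sym2 V} (heS : e ∈ S) :
    ∀ (n : ℕ) (p q : V) (P : G.Walk p q), P.length ≤ n → P.IsPath →
      (∀ x ∈ P.support, x ∉ T) → (p = v ∨ p ∈ A) → (q = v' ∨ q ∈ A) →
      (v ∈ P.support → p = v) → (v' ∈ P.support → q = v') →
      e ∈ P.edges → False := by
  classical
  intro n
  induction n with
  | zero =>
    intro p q P hlen _ _ _ _ _ _ he
    have h1 : 0 < P.edges.length := List.length_pos_of_mem he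
    rw [P.length_edges] at h1
    omega
  | succ n ih =>
    intro p q P hlen hP hPT hp hq hvP hv'P he
    by_cases hex : ∃ z, z ∈ P.support ∧ z ∈ A ∧ z ≠ p ∧ z ≠ q
    · obtain ⟨z, hz1, hzA, hzp, hzq⟩ := hex
      have hlen2 := congrArg Walk.length (P.take_spec hz1)
      rw [Walk.length_append] at hlen2
      have hd1 : (P.dropUntil z hz1).length ≠ 0 := by
        intro h0
        exact hzq (Walk.nil_iff_length_eq.mpr h0).eq
      have ht1 : (P.takeUntil z hz1).length ≠ 0 := by
        intro h0
        exact hzp (Walk.nil_iff_length_eq.mpr h0).eq.symm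
      have he2 := he
      rw [← P.take_spec hz1, Walk.edges_append, List.mem_append] at he2
      rcases he2 with he2 | he2
      · have hnv' : v' ∉ (P.takeUntil z hz1).support := by
          intro hv'1
          have hq' := hv'P (P.support_takeUntil_subset hz1 hv'1)
          subst hq'
          exact end_not_mem_takeUntil hP hz1 hzq hv'1
        exact ih p z (P.takeUntil z hz1) (by omega) (hP.takeUntil hz1)
          (fun x hx => hPT x (P.support_takeUntil_subset hz1 hx)) hp (Or.inr hzA)
          (fun hv1 => hvP (P.support_takeUntil_subset hz1 hv1))
          (fun hv'1 => absurd hv'1 hnv') he2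
      · have hnv : v ∉ (P.dropUntil z hz1).support := by
          intro hv1
          have hp' := hvP (P.support_dropUntil_subset hz1 hv1)
          subst hp'
          exact start_not_mem_dropUntil hP hz1 hzp hv1
        exact ih z q (P.dropUntil z hz1) (by omega) (hP.dropUntil hz1)
          (fun x hx => hPT x (P.support_dropUntil_subset hz1 hx)) (Or.inr hzA) hq
          (fun hv1 => absurd hv1 hnv)
          (fun hv'1 => hv'P (P.support_dropUntil_subset hz1 hv'1)) he2
    · push_neg at hex
      have hint : ∀ z, z ∈ P.support → z ∈ A → z = p ∨ z = q := by
        intro z h1 h2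
        by_cases h3 : z = p
        · exact Or.inl h3
        · exact Or.inr (hex z h1 h2 h3)
      have hPlen : 0 < P.length := by
        have h1 : 0 < P.edges.length := List.length_pos_of_mem he
        rwa [P.length_edges] at h1
      have hpq : p ≠ q := by
        rintro rfl
        rw [Walk.isPath_iff_eq_nil] at hP
        subst hP
        simp at he
      -- build the connector walk from q back to p
      obtain ⟨R', hR'path, hR'supp, hR'S⟩ :
          ∃ R' : G.Walk q p, R'.IsPath ∧ (∀ z ∈ R'.support, z ∈ A ∨ z = p ∨ z = q) ∧
            (s(p, q) ∈ R'.edges → s(p, q) ∉ S) := by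
        rcases hp with rfl | hpA
        · rcases hq with rfl | hqA
          · -- p = v, q = v'
            obtain ⟨R, hRp, hRA⟩ := exists_path_in hconn hb ha
            have hvR : p ∉ R.support := fun h => hvA (hRA p h)
            have hv'R : q ∉ R.support := fun h => hv'A (hRA q h)
            have hcp : (R.concat hva.symm).IsPath := by
              rw [← Walk.isPath_reverse_iff, Walk.reverse_concat, Walk.cons_isPath_iff]
              refine ⟨hRp.reverse, ?_⟩
              rw [Walk.support_reverse, List.mem_reverse]; exact hvR
            refine ⟨Walk.cons hv'b (R.concat hva.symm), ?_, ?_, ?_⟩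
            · rw [Walk.cons_isPath_iff]
              refine ⟨hcp, ?_⟩
              rw [Walk.support_concat, List.mem_append,
                List.mem_singleton]
              rintro (h1 | h1)
              · exact hv'R h1
              · exact hpq h1.symm
            · intro x hx
              rw [Walk.support_cons, List.mem_cons] at hx
              rcases hx with h1 | hx
              · exact Or.inr (Or.inr h1)
              · rw [Walk.support_concat, List.mem_append,
                  List.mem_singleton] at hx
                rcases hx with hx | hx
                · exact Or.inl (hRA x hx)
                · exact Or.inr (Or.inl hx)
            · intro _ hcon
              exact hnadj ((SimpleGraph.mem_edgeSet G).mp (hS hcon))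
          · -- p = v, q ∈ A
            obtain ⟨R, hRp, hRA⟩ := exists_path_in hconn hqA ha
            have hvR : p ∉ R.support := fun h => hvA (hRA p h)
            have hcp : (R.concat hva.symm).IsPath := by
              rw [← Walk.isPath_reverse_iff, Walk.reverse_concat, Walk.cons_isPath_iff]
              refine ⟨hRp.reverse, ?_⟩
              rw [Walk.support_reverse, List.mem_reverse]; exact hvR
            refine ⟨R.concat hva.symm, hcp, ?_, ?_⟩
            · intro x hx
              rw [Walk.support_concat, List.mem_append,
                List.mem_singleton] at hx
              rcases hx with hx | hx
              · exact Or.inl (hRA x hx)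
              · exact Or.inr (Or.inl hx)
            · intro hcon
              rw [Walk.edges_concat, List.concat_eq_append, List.mem_append,
                List.mem_singleton] at hcon
              rcases hcon with hcon | hcon
              · exfalso
                have := R.fst_mem_support_of_mem_edges hcon
                exact hvA (hRA p this)
              · rw [Sym2.eq_iff] at hcon
                rcases hcon with ⟨h1, -⟩ | ⟨-, h2⟩
                · rw [h1] at hvA
                  exact absurd ha hvA
                · rw [h2]
                  exact hvaS
        · rcases hq with rfl | hqA
          · -- p ∈ A, q = v'
            obtain ⟨R, hRp, hRA⟩ := exists_path_in hconn hb hpA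
            have hv'R : q ∉ R.support := fun h => hv'A (hRA q h)
            refine ⟨Walk.cons hv'b R, ?_, ?_, ?_⟩
            · rw [Walk.cons_isPath_iff]; exact ⟨hRp, hv'R⟩
            · intro x hx
              rw [Walk.support_cons, List.mem_cons] at hx
              rcases hx with h1 | hx
              · exact Or.inr (Or.inr h1)
              · exact Or.inl (hRA x hx)
            · intro hcon
              rw [Walk.edges_cons, List.mem_cons] at hcon
              rcases hcon with hcon | hcon
              · rw [Sym2.eq_iff] at hcon
                rcases hcon with ⟨h1, -⟩ | ⟨h1, h2⟩
                · rw [h1] at hpA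
                  exact absurd hpA hv'A
                · rw [h1, Sym2.eq_swap]
                  exact hv'bS
              · exfalso
                have := R.snd_mem_support_of_mem_edges hcon
                exact hv'A (hRA q this)
          · -- p ∈ A, q ∈ A
            obtain ⟨R, hRp, hRA⟩ := exists_path_in hconn hqA hpA
            exact ⟨R, hRp, fun x hx => Or.inl (hRA x hx), fun _ => hAS p q hpA hqA⟩
      have hedisj : ∀ f, f ∈ P.edges → f ∈ R'.edges → False := by
        intro f hf1 hf2
        induction f using Sym2.ind with
        | _ x y =>
          have hx1 : x ∈ P.support := P.fst_mem_support_of_mem_edges hf1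
          have hy1 : y ∈ P.support := P.snd_mem_support_of_mem_edges hf1
          have hx2 : x ∈ R'.support := R'.fst_mem_support_of_mem_edges hf2
          have hy2 : y ∈ R'.support := R'.snd_mem_support_of_mem_edges hf2
          have hxy : x ≠ y := (P.adj_of_mem_edges hf1).ne
          have hx3 : x = p ∨ x = q := by
            rcases hR'supp x hx2 with h1 | h1 | h1
            · exact hint x hx1 h1
            · exact Or.inl h1
            · exact Or.inr h1
          have hy3 : y = p ∨ y = q := by
            rcases hR'supp y hy2 with h1 | h1 | h1
            · exact hint y hy1 h1
            · exact Or.inl h1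
            · exact Or.inr h1
          have hfpq : s(x, y) = s(p, q) := by
            rcases hx3 with rfl | rfl <;> rcases hy3 with rfl | rfl
            · exact absurd rfl hxy
            · rfl
            · exact Sym2.eq_swap
            · exact absurd rfl hxy
          rw [hfpq] at hf1 hf2
          have hPe := path_edges_eq_of_edge hP hf1
          have he3 : e = s(p, q) := by
            rw [hPe] at he
            exact List.mem_singleton.mp he
          rw [he3] at heS
          exact (hR'S hf2) heS
      have hcyc : (P.append R').IsCycle := by
        refine ⟨⟨⟨?_⟩, ?_⟩, ?_⟩
        · rw [Walk.edges_append]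
          refine List.nodup_append'.mpr ⟨hP.isTrail.edges_nodup,
            hR'path.isTrail.edges_nodup, ?_⟩
          intro f hf1 hf2
          exact hedisj f hf1 hf2
        · intro hnil
          have := congrArg Walk.length hnil
          rw [Walk.length_append] at this
          simp only [Walk.length_nil] at this
          omega
        · rw [Walk.tail_support_append]
          refine List.nodup_append'.mpr ⟨hP.support_nodup.tail,
            hR'path.support_nodup.tail, ?_⟩
          intro x hx1 hx2
          have hx1' : x ∈ P.support := List.mem_of_mem_tail hx1
          have hx2' : x ∈ R'.support := List.mem_of_mem_tail hx2
          have hpt : p ∉ P.support.tail := by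
            have := hP.support_nodup
            rw [Walk.support_eq_cons] at this
            exact (List.nodup_cons.mp this).1
          have hqt : q ∉ R'.support.tail := by
            have := hR'path.support_nodup
            rw [Walk.support_eq_cons] at this
            exact (List.nodup_cons.mp this).1
          have hx3 : x = p ∨ x = q := by
            rcases hR'supp x hx2' with h1 | h1 | h1
            · exact hint x hx1' h1
            · exact Or.inl h1
            · exact Or.inr h1
          rcases hx3 with rfl | rfl
          · exact hpt hx1
          · exact hqt hx2
      have hcsupp : ∀ x ∈ (P.append R').support, x ∉ T := by
        intro x hx
        rw [Walk.mem_support_append_iff] at hx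
        rcases hx with hx | hx
        · exact hPT x hx
        · rcases hR'supp x hx with h1 | h1 | h1
          · exact hAT x h1
          · rw [h1]; exact hPT p P.start_mem_support
          · rw [h1]; exact hPT q P.end_mem_support
      have hee : e ∈ (P.append R').edges := by
        rw [Walk.edges_append, List.mem_append]
        exact Or.inl he
      exact (H p (P.append R') hcyc hcsupp e hee) heS


/-- Extract from a cycle based at `v` containing the edge `vv'` a `v`-`v'` path
not using the edge `vv'`. -/
lemma cycle_to_path {v v' : V} (hvv' : v ≠ v') (c : G.Walk v v) (hc : c.IsCycle)
    (hmem : s(v, v') ∈ c.edges) :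
    ∃ P : G.Walk v v', P.IsPath ∧ s(v, v') ∉ P.edges ∧
      (∀ f ∈ P.edges, f ∈ c.edges) ∧ (∀ f ∈ c.edges, f ≠ s(v, v') → f ∈ P.edges) ∧
      (∀ x ∈ P.support, x ∈ c.support) := by
  have hnn : ¬ c.Nil := hc.isCircuit.not_nil
  obtain ⟨x, h, q, rfl⟩ := Walk.not_nil_iff.mp hnn
  rw [Walk.cons_isCycle_iff] at hc
  obtain ⟨hq, hns⟩ := hc
  by_cases hx : x = v'
  · subst hx
    refine ⟨q.reverse, hq.reverse, ?_, ?_, ?_, ?_⟩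
    · rw [Walk.edges_reverse, List.mem_reverse]; exact hns
    · intro f hf
      rw [Walk.edges_reverse, List.mem_reverse] at hf
      rw [Walk.edges_cons]
      exact List.mem_cons_of_mem _ hf
    · intro f hf hfne
      rw [Walk.edges_cons, List.mem_cons] at hf
      rcases hf with rfl | hf
      · exact absurd rfl hfne
      · rw [Walk.edges_reverse, List.mem_reverse]; exact hf
    · intro y hy
      rw [Walk.support_reverse, List.mem_reverse] at hy
      rw [Walk.support_cons]
      exact List.mem_cons_of_mem _ hy
  · have hq' : s(v, v') ∈ q.edges := by
      rw [Walk.edges_cons, List.mem_cons] at hmem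
      rcases hmem with hmem | hmem
      · rw [Sym2.eq_iff] at hmem
        rcases hmem with ⟨-, h2⟩ | ⟨h1, h2⟩
        · exact absurd h2.symm hx
        · exact absurd h2.symm hvv'
      · exact hmem
    have hqrev : s(v, v') ∈ q.reverse.edges := by
      rw [Walk.edges_reverse, List.mem_reverse]; exact hq'
    obtain ⟨h2, r, hr⟩ := path_cons_of_edge' hq.reverse hqrev
    have hrp : (Walk.cons h2 r).IsPath := hr ▸ hq.reverse
    rw [Walk.cons_isPath_iff] at hrp
    obtain ⟨hrpath, hvr⟩ := hrp
    have hnde : s(v, v') ∉ r.edges := by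
      intro hcon
      have := hq.reverse.edges_nodup
      rw [hr, Walk.edges_cons] at this
      exact (List.nodup_cons.mp this).1 hcon
    have hredges : ∀ f ∈ r.edges, f ∈ q.edges := by
      intro f hf
      have : f ∈ q.reverse.edges := by
        rw [hr, Walk.edges_cons]; exact List.mem_cons_of_mem _ hf
      rwa [Walk.edges_reverse, List.mem_reverse] at this
    have hrsupp : ∀ y ∈ r.support, y ∈ q.support := by
      intro y hy
      have : y ∈ q.reverse.support := by
        rw [hr, Walk.support_cons]; exact List.mem_cons_of_mem _ hy
      rwa [Walk.support_reverse, List.mem_reverse] at this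
    refine ⟨Walk.cons h r.reverse, ?_, ?_, ?_, ?_, ?_⟩
    · rw [Walk.cons_isPath_iff]
      refine ⟨hrpath.reverse, ?_⟩
      rw [Walk.support_reverse, List.mem_reverse]; exact hvr
    · rw [Walk.edges_cons, List.mem_cons]
      rintro (hco | hco)
      · rw [Sym2.eq_iff] at hco
        rcases hco with ⟨-, h4⟩ | ⟨h3, h4⟩
        · exact hx h4.symm
        · exact hvv' h4.symm
      · rw [Walk.edges_reverse, List.mem_reverse] at hco
        exact hnde hco
    · intro f hf
      rw [Walk.edges_cons, List.mem_cons] at hf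
      rw [Walk.edges_cons]
      rcases hf with rfl | hf
      · exact List.mem_cons_self
      · rw [Walk.edges_reverse, List.mem_reverse] at hf
        exact List.mem_cons_of_mem _ (hredges f hf)
    · intro f hf hfne
      rw [Walk.edges_cons, List.mem_cons] at hf ⊢
      rcases hf with rfl | hf
      · exact Or.inl rfl
      · have : f ∈ q.reverse.edges := by
          rw [Walk.edges_reverse, List.mem_reverse]; exact hf
        rw [hr, Walk.edges_cons, List.mem_cons] at this
        rcases this with rfl | this
        · exact absurd rfl hfne
        · refine Or.inr ?_
          rw [Walk.edges_reverse, List.mem_reverse]; exact this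
    · intro y hy
      rw [Walk.support_cons, List.mem_cons] at hy
      rw [Walk.support_cons]
      rcases hy with rfl | hy
      · exact List.mem_cons_self
      · rw [Walk.support_reverse, List.mem_reverse] at hy
        exact List.mem_cons_of_mem _ (hrsupp y hy)


end AddEdgeAux

open AddEdgeAux

/-- Suppose `v ≠ v'` are non-adjacent, and `C₁, …, C_{k+1}` are
pairwise disjoint subsets of `V ∖ {v, v'}`, each inducing a connected subgraph
containing no edge of `S`, each adjacent to `v` and to `v'` via edges not in `S`.
Let `G'` be `G` plus the edge `vv'` (with `vv' ∉ S`). Then for every `T ⊆ V` with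
`|T| ≤ k`, `G[V ∖ T]` has no `S`-cycle iff `G'[V ∖ T]` has no `S`-cycle. -/
theorem add_edge_preserves_solutions {V : Type} [Fintype V]
    (G : SimpleGraph V) (S : Set (Sym2 V)) (hS : S ⊆ G.edgeSet) (k : ℕ)
    (v v' : V) (hne : v ≠ v') (hnadj : ¬ G.Adj v v')
    (C : Fin (k + 1) → Set V)
    (hCdisj : ∀ i j, i ≠ j → Disjoint (C i) (C j))
    (hCv : ∀ i, v ∉ C i ∧ v' ∉ C i)
    (hCconn : ∀ i, (G.induce (C i)).Connected)
    (hCS : ∀ i, ∀ x y : V, x ∈ C i → y ∈ C i → s(x, y) ∉ S)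
    (hCa : ∀ i, ∃ a ∈ C i, G.Adj v a ∧ s(v, a) ∉ S)
    (hCb : ∀ i, ∃ b ∈ C i, G.Adj v' b ∧ s(v', b) ∉ S)
    (G' : SimpleGraph V)
    (hG' : ∀ a b : V, G'.Adj a b ↔
      (G.Adj a b ∨ (a = v ∧ b = v') ∨ (a = v' ∧ b = v)))
    (T : Set V) (hT : T.ncard ≤ k) :
    (∀ (w : V) (c : G.Walk w w), c.IsCycle → (∀ x ∈ c.support, x ∉ T) →
        ∀ e ∈ c.edges, e ∉ S) ↔
    (∀ (w : V) (c : G'.Walk w w), c.IsCycle → (∀ x ∈ c.support, x ∉ T) →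
        ∀ e ∈ c.edges, e ∉ S) := by
  classical
  have hle : ∀ x y : V, G.Adj x y → G'.Adj x y := fun x y h => (hG' x y).mpr (Or.inl h)
  constructor
  · intro H w c hc hcT e he heS
    -- any edge of a `G'`-walk other than `s(v,v')` is a `G`-edge
    have hSvv' : s(v, v') ∉ S := by
      intro hcon
      exact hnadj ((SimpleGraph.mem_edgeSet G).mp (hS hcon))
    by_cases hvv'mem : s(v, v') ∈ c.edges
    · -- the cycle uses the new edge
      have hv : v ∈ c.support := c.fst_mem_support_of_mem_edges hvv'mem
      have hc2 : (c.rotate v hv).IsCycle := hc.rotate hv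
      have hmem2 : s(v, v') ∈ (c.rotate v hv).edges :=
        ((c.rotate_edges v hv).mem_iff).mpr hvv'mem
      obtain ⟨P, hPpath, hPvv', hPsub, hPsup, hPsupp⟩ :=
        cycle_to_path hne (c.rotate v hv) hc2 hmem2
      have hPsupport : ∀ x ∈ P.support, x ∈ c.support := by
        intro x hx
        have h1 := hPsupp x hx
        rw [Walk.support_eq_cons (c.rotate v hv)] at h1
        rcases List.mem_cons.mp h1 with h1 | h1
        · rw [h1]; exact hv
        · have h2 := (c.support_rotate v hv).mem_iff.mp h1
          exact List.mem_of_mem_tail h2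
      have hPedges : ∀ f ∈ P.edges, f ∈ c.edges := by
        intro f hf
        exact ((c.rotate_edges v hv).mem_iff).mp (hPsub f hf)
      -- transfer P to G
      have hkey : ∀ x y : V, s(x, y) ∈ P.edges → G.Adj x y := by
        intro x y hf
        have hadj : G'.Adj x y := P.adj_of_mem_edges hf
        rcases (hG' x y).mp hadj with h | ⟨h1, h2⟩ | ⟨h1, h2⟩
        · exact h
        · rw [h1, h2] at hf
          exact absurd hf hPvv'
        · rw [h1, h2, Sym2.eq_swap] at hf
          exact absurd hf hPvv'
      have hPG : ∀ f ∈ P.edges, f ∈ G.edgeSet := by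
        intro f hf
        induction f using Sym2.ind with
        | _ x y => exact (SimpleGraph.mem_edgeSet G).mpr (hkey x y hf)
      set P₀ : G.Walk v v' := P.transfer G hPG with hP₀
      have hP₀path : P₀.IsPath := hPpath.transfer hPG
      have hP₀edges : P₀.edges = P.edges := P.edges_transfer hPG
      have hP₀supp : P₀.support = P.support := P.support_transfer hPG
      -- pigeonhole: some Cᵢ avoids T
      obtain ⟨i, hi⟩ : ∃ i : Fin (k + 1), ∀ x ∈ C i, x ∉ T := by
        by_contra hcon
        push_neg at hcon
        choose f hf1 hf2 using hcon
        have hinj : Function.Injective f := by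
          intro i j hij
          by_contra hne'
          exact Set.disjoint_left.mp (hCdisj i j hne') (hf1 i) (hij ▸ hf1 j)
        have hcard : k + 1 ≤ T.ncard := by
          rw [Set.ncard_eq_toFinset_card']
          have := Finset.card_le_card_of_injOn (s := (Finset.univ : Finset (Fin (k + 1))))
            (t := T.toFinset) f (fun i _ => Set.mem_toFinset.mpr (hf2 i)) (hinj.injOn)
          simpa using this
        omega
      obtain ⟨a, ha, hva, hvaS⟩ := hCa i
      obtain ⟨b, hb, hv'b, hv'bS⟩ := hCb i
      have hePne : e ≠ s(v, v') := fun h => hSvv' (h ▸ heS)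
      have heRot : e ∈ (c.rotate v hv).edges := ((c.rotate_edges v hv).mem_iff).mpr he
      have heP : e ∈ P₀.edges := by
        rw [hP₀edges]
        exact hPsup e heRot hePne
      exact absurd heS <| by
        exfalso
        exact no_sPath G S hS T v v' hnadj (C i) (hCv i).1 (hCv i).2 hi
          (hCconn i) (hCS i) ha hva hvaS hb hv'b hv'bS H heS P₀.length v v' P₀
          le_rfl hP₀path
          (fun x hx => hcT x (hPsupport x (hP₀supp ▸ hx)))
          (Or.inl rfl) (Or.inl rfl) (fun _ => rfl) (fun _ => rfl) heP
    · -- the cycle avoids the new edge: it is a `G`-cycle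
      have hcG : ∀ f ∈ c.edges, f ∈ G.edgeSet := by
        intro f hf
        induction f using Sym2.ind with
        | _ x y =>
          have hadj : G'.Adj x y := c.adj_of_mem_edges hf
          rcases (hG' x y).mp hadj with h | ⟨h1, h2⟩ | ⟨h1, h2⟩
          · exact (SimpleGraph.mem_edgeSet G).mpr h
          · rw [h1, h2] at hf
            exact absurd hf hvv'mem
          · rw [h1, h2, Sym2.eq_swap] at hf
            exact absurd hf hvv'mem
      refine H w (c.transfer G hcG) (hc.transfer hcG) ?_ e ?_ heS
      · rw [c.support_transfer hcG]
        exact hcT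
      · rw [c.edges_transfer hcG]
        exact he
  · intro H w c hc hcT e he heS
    have hcG' : ∀ f ∈ c.edges, f ∈ G'.edgeSet := by
      intro f hf
      induction f using Sym2.ind with
      | _ x y =>
        exact (SimpleGraph.mem_edgeSet G').mpr (hle x y (c.adj_of_mem_edges hf))
    refine H w (c.transfer G' hcG') (hc.transfer hcG') ?_ e ?_ heS
    · rw [c.support_transfer hcG']
      exact hcT
    · rw [c.edges_transfer hcG']
      exact he
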